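/- Let G be an abelian group and let H be a point-separating subgroup of Hom(G,𝕋). Then the topology 𝒯_H induced on G by H (the weak/initial topology determined by the homomorphisms in H) is a Hausdorff totally bounded group topology on G, and the weight of (G,𝒯_H) equals the cardinality of H. -/

import Mathlib

open Pointwise

local notation "𝕋" => AddCircle (1 : ℝ)

/-- The weight of a topology: the least cardinality of a (topological) base. -/
noncomputable def topWeight {X : Type*} (t : TopologicalSpace X) : Cardinal :=
  ⨅ B : {B : Set (Set X) // @TopologicalSpace.IsTopologicalBasis X t B}, Cardinal.mk B.1

/-- A group topology is totally bounded if every nonempty open set `U` admits a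
finite set `F` with `F + U = G`. -/
def TotallyBoundedGroupTop {G : Type*} [AddCommGroup G] (t : TopologicalSpace G) : Prop :=
  ∀ U : Set G, @IsOpen G t U → U.Nonempty → ∃ F : Set G, F.Finite ∧ F + U = Set.univ

/-- The weak (initial) topology on `G` induced by a subgroup `H` of `Hom(G, 𝕋)`. -/
noncomputable def weakTopOf {G : Type*} [AddCommGroup G] (H : AddSubgroup (G →+ 𝕋)) :
    TopologicalSpace G :=
  ⨅ h : H, TopologicalSpace.induced (⇑(h : G →+ 𝕋)) inferInstance

namespace StmtAux

local instance fact_one_pos : Fact ((0:ℝ) < 1) := ⟨one_pos⟩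

/-! ### Facts about the circle -/

lemma T_norm_coe_le (x : ℝ) : ‖(x : 𝕋)‖ ≤ |x| := by
  simpa using QuotientAddGroup.norm_mk_le_norm (S := AddSubgroup.zmultiples (1:ℝ)) (m := x)

lemma T_intCast_eq_zero (n : ℤ) : ((n : ℝ) : 𝕋) = 0 := by
  rw [AddCircle.coe_eq_zero_iff]
  exact ⟨n, by simp⟩

lemma T_coe_zero : ((0 : ℝ) : 𝕋) = 0 := by
  simpa using T_intCast_eq_zero 0

lemma T_exists_rep (t : 𝕋) : ∃ x : ℝ, (x : 𝕋) = t ∧ |x| = ‖t‖ ∧ |x| ≤ 1/2 := by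
  induction t using QuotientAddGroup.induction_on with
  | H y =>
    have habs : |y - round y| ≤ 1/2 := abs_sub_round y
    have hco : ((y - round y : ℝ) : 𝕋) = (y : 𝕋) := by
      rw [AddCircle.coe_sub, T_intCast_eq_zero, sub_zero]
    refine ⟨y - round y, hco, ?_, habs⟩
    rw [← hco]
    exact ((AddCircle.norm_coe_eq_abs_iff (p := 1) one_ne_zero).mpr
      (by simpa using habs)).symm

lemma T_exists_nsmul_big (t : 𝕋) (ht : t ≠ 0) : ∃ n : ℕ, 1/4 ≤ ‖n • t‖ := by
  obtain ⟨x, rfl, hxn, hx2⟩ := T_exists_rep t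
  have hxpos : 0 < |x| := by rw [hxn]; exact norm_pos_iff.mpr ht
  by_cases h14 : 1/4 ≤ |x|
  · exact ⟨1, by rwa [one_smul, ← hxn]⟩
  push_neg at h14
  have hex : ∃ n : ℕ, 1/4 ≤ (n : ℝ) * |x| := by
    obtain ⟨n, hn⟩ := exists_nat_ge (1/4 / |x|)
    exact ⟨n, by rwa [div_le_iff₀ hxpos] at hn⟩
  classical
  let n₀ := Nat.find hex
  have hn₀ : 1/4 ≤ (n₀ : ℝ) * |x| := Nat.find_spec hex
  have hn₀ne : n₀ ≠ 0 := by
    intro h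
    have h2 : 1/4 ≤ ((0:ℕ) : ℝ) * |x| := h ▸ hn₀
    rw [Nat.cast_zero, zero_mul] at h2
    linarith
  have hlt : ((n₀ - 1 : ℕ) : ℝ) * |x| < 1/4 :=
    lt_of_not_ge (Nat.find_min hex (Nat.pred_lt hn₀ne))
  have hle : (n₀ : ℝ) * |x| < 1/2 := by
    have hc : (n₀ : ℝ) = ((n₀ - 1 : ℕ) : ℝ) + 1 := by
      have h3 : n₀ - 1 + 1 = n₀ := Nat.succ_pred_eq_of_pos (Nat.pos_of_ne_zero hn₀ne)
      rw [← h3]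
      push_cast
      ring
    rw [hc, add_mul, one_mul]
    linarith
  refine ⟨n₀, ?_⟩
  have hsm : n₀ • ((x : ℝ) : 𝕋) = (((n₀ : ℝ) * x : ℝ) : 𝕋) := by
    rw [← AddCircle.coe_nsmul, nsmul_eq_mul]
  rw [hsm]
  have habs : |(n₀ : ℝ) * x| = (n₀ : ℝ) * |x| := by
    rw [abs_mul, Nat.abs_cast]
  rw [(AddCircle.norm_coe_eq_abs_iff (p := 1) one_ne_zero).mpr
    (by rw [habs]; simpa using hle.le)]
  rw [habs]; exact hn₀

lemma addHom_eq_of_close {G : Type*} [AddCommGroup G] {f g : G →+ 𝕋}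
    (h : ∀ x, ‖f x - g x‖ < 1/4) : f = g := by
  ext x
  by_contra hx
  obtain ⟨n, hn⟩ := T_exists_nsmul_big (f x - g x) (sub_ne_zero.mpr hx)
  have heq : n • (f x - g x) = f (n • x) - g (n • x) := by
    rw [smul_sub, map_nsmul, map_nsmul]
  rw [heq] at hn
  exact absurd (h (n • x)) (not_lt.mpr hn)

lemma T_exists_grid (t : 𝕋) : ∃ k : ℕ, k < 33 ∧ ‖t - (((k : ℝ)/32 : ℝ) : 𝕋)‖ ≤ 1/64 := by
  induction t using QuotientAddGroup.induction_on with
  | H x =>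
    set m : ℤ := round (32 * x) with hm
    have hnn : (0:ℤ) ≤ m % 32 := Int.emod_nonneg m (by norm_num)
    refine ⟨(m % 32).toNat, ?_, ?_⟩
    · have h1 : m % 32 < 32 := Int.emod_lt_of_pos m (by norm_num)
      omega
    · have hk : (((m % 32).toNat : ℝ)) = ((m % 32 : ℤ) : ℝ) := by
        exact_mod_cast congrArg (fun z : ℤ => (z : ℝ)) (Int.toNat_of_nonneg hnn)
      have hq : (m : ℝ) = 32 * ((m / 32 : ℤ) : ℝ) + ((m % 32 : ℤ) : ℝ) := by
        exact_mod_cast congrArg (fun z : ℤ => (z : ℝ)) (Int.mul_ediv_add_emod m 32).symm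
      have hsplit : x - ((m % 32 : ℤ) : ℝ)/32 = (x - (m : ℝ)/32) + ((m / 32 : ℤ) : ℝ) := by
        rw [hq]; ring
      have key : ((x : ℝ) : 𝕋) - (((((m % 32).toNat : ℝ))/32 : ℝ) : 𝕋)
          = (((x - (m : ℝ)/32) : ℝ) : 𝕋) := by
        rw [hk, ← AddCircle.coe_sub, hsplit, AddCircle.coe_add, T_intCast_eq_zero, add_zero]
      rw [key]
      have habs : x - (m : ℝ)/32 = (32 * x - m)/32 := by ring
      calc ‖(((x - (m : ℝ)/32) : ℝ) : 𝕋)‖ ≤ |x - (m:ℝ)/32| := T_norm_coe_le _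
        _ = |32 * x - (m:ℝ)|/32 := by
            rw [habs, abs_div, abs_of_pos (show (0:ℝ) < 32 by norm_num)]
        _ ≤ (1/2)/32 := by
            have h4 : |32 * x - (m:ℝ)| ≤ 1/2 := by rw [hm]; exact abs_sub_round (32 * x)
            linarith
        _ = 1/64 := by norm_num

/-! ### The evaluation homomorphism -/

variable {G : Type*} [AddCommGroup G] (H : AddSubgroup (G →+ 𝕋))

/-- Evaluation homomorphism into the product. -/
noncomputable def eHom : G →+ (↥H → 𝕋) where
  toFun x h := (h : G →+ 𝕋) x
  map_zero' := funext fun h => map_zero _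
  map_add' x y := funext fun h => map_add _ x y

lemma eHom_apply (x : G) (h : ↥H) : eHom H x h = (h : G →+ 𝕋) x := rfl

lemma weakTopOf_eq : weakTopOf H = TopologicalSpace.induced (⇑(eHom H)) Pi.topologicalSpace := by
  rw [show (Pi.topologicalSpace : TopologicalSpace (↥H → 𝕋))
      = ⨅ h : ↥H, TopologicalSpace.induced (fun f => f h) inferInstance from rfl,
    induced_iInf]
  simp only [induced_compose]
  rfl

lemma topAddGroup : @IsTopologicalAddGroup G (weakTopOf H) _ := by
  unfold weakTopOf
  exact topologicalAddGroup_iInf fun h => topologicalAddGroup_induced (h : G →+ 𝕋)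

lemma eHom_inj (hsep : ∀ x : G, x ≠ 0 → ∃ h ∈ H, h x ≠ 0) :
    Function.Injective (eHom H) := by
  intro x y hxy
  by_contra hne
  obtain ⟨h, hH, hne0⟩ := hsep (x - y) (sub_ne_zero.mpr hne)
  apply hne0
  have := congrFun hxy ⟨h, hH⟩
  simp only [eHom_apply] at this
  rw [map_sub, show h x = h y from this, sub_self]

lemma t2 (hsep : ∀ x : G, x ≠ 0 → ∃ h ∈ H, h x ≠ 0) : @T2Space G (weakTopOf H) := by
  letI : TopologicalSpace G := weakTopOf H
  have hemb : Topology.IsEmbedding (⇑(eHom H)) := ⟨⟨weakTopOf_eq H⟩, eHom_inj H hsep⟩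
  exact hemb.t2Space

lemma totBdd : TotallyBoundedGroupTop (weakTopOf H) := by
  rw [weakTopOf_eq]
  letI tG : TopologicalSpace G := TopologicalSpace.induced (⇑(eHom H)) Pi.topologicalSpace
  intro U hU hne
  obtain ⟨u, hu⟩ := hne
  obtain ⟨O, hO, hOU⟩ := isOpen_induced_iff.mp hU
  set e := ⇑(eHom H) with he
  set W : Set (↥H → 𝕋) := (fun z => z + e u) ⁻¹' O with hW
  have hWopen : IsOpen W := hO.preimage (continuous_id.add continuous_const)
  have hW0 : (0 : ↥H → 𝕋) ∈ W := by
    have : (0 : ↥H → 𝕋) + e u = e u := zero_add _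
    simp only [hW, Set.mem_preimage, this]
    rw [← hOU] at hu
    exact hu
  have hKcomp : IsCompact (closure (Set.range e)) := isClosed_closure.isCompact
  have hcover : closure (Set.range e) ⊆ ⋃ g : G, {z : ↥H → 𝕋 | z - e g ∈ W} := by
    intro k hk
    have : ∃ g : G, k - e g ∈ W := by
      have hopen : IsOpen {q : ↥H → 𝕋 | k - q ∈ W} := hWopen.preimage (continuous_const.sub continuous_id)
      have hmem : k ∈ {q : ↥H → 𝕋 | k - q ∈ W} := by simp [hW0]
      obtain ⟨q, hq1, g, rfl⟩ :=
        mem_closure_iff.mp hk _ hopen hmem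
      exact ⟨g, hq1⟩
    obtain ⟨g, hg⟩ := this
    exact Set.mem_iUnion.mpr ⟨g, hg⟩
  obtain ⟨s, hs⟩ := hKcomp.elim_finite_subcover
    (fun g : G => {z : ↥H → 𝕋 | z - e g ∈ W})
    (fun g => hWopen.preimage (continuous_id.sub continuous_const)) hcover
  refine ⟨(fun g => g - u) '' ↑s, (s.finite_toSet.image _), ?_⟩
  apply Set.eq_univ_of_forall
  intro x
  have hx : e x ∈ closure (Set.range e) := subset_closure ⟨x, rfl⟩
  obtain ⟨g, hgs, hgx⟩ := Set.mem_iUnion₂.mp (hs hx)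
  have hxg : x - g + u ∈ U := by
    rw [← hOU]
    simp only [Set.mem_preimage]
    have : e (x - g + u) = (e x - e g) + e u := by
      rw [he]; rw [map_add, map_sub]
    rw [this]
    exact hgx
  rw [Set.mem_add]
  exact ⟨g - u, ⟨g, hgs, rfl⟩, x - g + u, hxg, by abel⟩

/-! ### Upper bound for the weight -/

lemma topWeight_le_of_basis {X : Type*} (t : TopologicalSpace X) {B : Set (Set X)}
    (hB : @TopologicalSpace.IsTopologicalBasis X t B) : topWeight t ≤ Cardinal.mk B :=
  ciInf_le' (fun B : {B : Set (Set X) // @TopologicalSpace.IsTopologicalBasis X t B} =>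
    Cardinal.mk B.1) ⟨B, hB⟩

lemma topWeight_le_mkH (hH : Infinite ↥H) : topWeight (weakTopOf H) ≤ Cardinal.mk ↥H := by
  classical
  letI tG : TopologicalSpace G := weakTopOf H
  obtain ⟨b, hbc, -, hb⟩ := TopologicalSpace.exists_countable_basis 𝕋
  have hbne : b.Nonempty := by
    obtain ⟨v, hv, -⟩ := hb.exists_subset_of_mem_open (Set.mem_univ (0:𝕋)) isOpen_univ
    exact ⟨v, hv⟩
  obtain ⟨f, hf⟩ := hbc.exists_eq_range hbne
  have hfb : ∀ n, f n ∈ b := fun n => by rw [hf]; exact Set.mem_range_self _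
  let U : Finset (↥H × ℕ) → Set G := fun s => {x | ∀ p ∈ s, (p.1 : G →+ 𝕋) x ∈ f p.2}
  have hcont : ∀ h : ↥H, Continuous ⇑(h : G →+ 𝕋) :=
    fun h => continuous_iff_le_induced.mpr (iInf_le _ h)
  have hUeq : ∀ s, U s = ⋂ p ∈ s, ⇑((p.1 : ↥H) : G →+ 𝕋) ⁻¹' f p.2 := fun s => by
    ext x; simp [U]
  have hUopen : ∀ s, IsOpen (U s) := fun s => by
    rw [hUeq]
    exact isOpen_biInter_finset fun p _ => (hb.isOpen (hfb p.2)).preimage (hcont p.1)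
  have hnhds : ∀ (a : G) (O : Set G), a ∈ O → IsOpen O → ∃ s, a ∈ U s ∧ U s ⊆ O := by
    intro a O haO hO
    have hmem : O ∈ @nhds G tG a := hO.mem_nhds haO
    have hn : @nhds G tG a
        = ⨅ h : ↥H, @nhds G (TopologicalSpace.induced (⇑(h : G →+ 𝕋)) inferInstance) a :=
      nhds_iInf
    rw [hn, Filter.mem_iInf] at hmem
    obtain ⟨I, hIfin, V, hV, rfl⟩ := hmem
    have hchoice : ∀ i : I, ∃ n : ℕ,
        ((i : ↥H) : G →+ 𝕋) a ∈ f n ∧ ⇑((i : ↥H) : G →+ 𝕋) ⁻¹' f n ⊆ V i := by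
      intro i
      have := hV i
      rw [nhds_induced, Filter.mem_comap] at this
      obtain ⟨W, hW, hWsub⟩ := this
      obtain ⟨v, hvb, hav, hvW⟩ := hb.mem_nhds_iff.mp hW
      rw [hf] at hvb
      obtain ⟨n, rfl⟩ := hvb
      exact ⟨n, hav, (Set.preimage_mono hvW).trans hWsub⟩
    choose n hn₁ hn₂ using hchoice
    haveI : Fintype ↥I := hIfin.fintype
    refine ⟨Finset.univ.image (fun i : I => ((i : ↥H), n i)), ?_, ?_⟩
    · intro p hp
      obtain ⟨i, -, rfl⟩ := Finset.mem_image.mp hp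
      exact hn₁ i
    · intro x hx
      rw [Set.mem_iInter]
      intro i
      apply hn₂ i
      exact hx ((i : ↥H), n i) (Finset.mem_image.mpr ⟨i, Finset.mem_univ _, rfl⟩)
  have hbasis : @TopologicalSpace.IsTopologicalBasis G tG (Set.range U) :=
    TopologicalSpace.isTopologicalBasis_of_isOpen_of_nhds
      (fun u hu => by obtain ⟨s, rfl⟩ := hu; exact hUopen s)
      (fun x u hxu hu => by
        obtain ⟨s, h1, h2⟩ := hnhds x u hxu hu
        exact ⟨U s, ⟨s, rfl⟩, h1, h2⟩)
  calc topWeight tG ≤ Cardinal.mk (Set.range U) := topWeight_le_of_basis _ hbasis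
    _ ≤ Cardinal.mk (Finset (↥H × ℕ)) := Cardinal.mk_range_le
    _ = Cardinal.mk (↥H × ℕ) := Cardinal.mk_finset_of_infinite _
    _ = Cardinal.mk ↥H := by
        rw [Cardinal.mk_prod]
        simp only [Cardinal.mk_nat, Cardinal.lift_aleph0, Cardinal.lift_id']
        exact Cardinal.mul_eq_left (Cardinal.aleph0_le_mk _) (Cardinal.aleph0_le_mk _)
          Cardinal.aleph0_ne_zero

/-! ### Finite case -/

lemma T_coe_div_mod (m : ℤ) (n : ℕ) (hn : n ≠ 0) :
    (((m : ℝ)/n : ℝ) : 𝕋) = (((((m % (n:ℤ)) : ℤ) : ℝ)/n : ℝ) : 𝕋) := by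
  have hn' : (n : ℝ) ≠ 0 := Nat.cast_ne_zero.mpr hn
  have hq : (m : ℝ) = n * ((m / (n:ℤ) : ℤ) : ℝ) + (((m % (n:ℤ)) : ℤ) : ℝ) := by
    exact_mod_cast congrArg (fun z : ℤ => (z : ℝ)) (Int.mul_ediv_add_emod m n).symm
  have hsplit : (m : ℝ)/n = (((m % (n:ℤ)) : ℤ) : ℝ)/n + ((m / (n:ℤ) : ℤ) : ℝ) := by
    rw [hq]; field_simp; ring
  rw [hsplit, AddCircle.coe_add, T_intCast_eq_zero, add_zero]

lemma T_torsion_finite (n : ℕ) (hn : n ≠ 0) : Finite {t : 𝕋 // n • t = 0} := by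
  have hn' : (n : ℝ) ≠ 0 := Nat.cast_ne_zero.mpr hn
  have hmem : ∀ k : Fin n, n • (((((k : ℕ) : ℝ)/n : ℝ)) : 𝕋) = 0 := by
    intro k
    rw [← AddCircle.coe_nsmul, nsmul_eq_mul]
    have : (n : ℝ) * (((k : ℕ) : ℝ)/n) = ((k : ℕ) : ℝ) := by field_simp
    rw [this]
    exact_mod_cast T_intCast_eq_zero ((k : ℕ) : ℤ)
  have hsurj : Function.Surjective
      (fun k : Fin n => (⟨_, hmem k⟩ : {t : 𝕋 // n • t = 0})) := by
    rintro ⟨t, ht⟩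
    induction t using QuotientAddGroup.induction_on with
    | H x =>
      have : ((n • x : ℝ) : 𝕋) = 0 := by rw [AddCircle.coe_nsmul]; exact ht
      rw [AddCircle.coe_eq_zero_iff] at this
      obtain ⟨m, hm⟩ := this
      have hm' : (m : ℝ) = (n : ℝ) * x := by
        rw [zsmul_eq_mul, mul_one, nsmul_eq_mul] at hm
        exact hm
      have hx : x = (m : ℝ)/n := by
        rw [hm', mul_div_cancel_left₀ _ hn']
      have hnn : (0:ℤ) ≤ m % (n:ℤ) := Int.emod_nonneg m (by exact_mod_cast hn)
      have hltn : m % (n:ℤ) < (n:ℤ) := Int.emod_lt_of_pos m (by exact_mod_cast Nat.pos_of_ne_zero hn)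
      refine ⟨⟨(m % (n:ℤ)).toNat, by omega⟩, ?_⟩
      apply Subtype.ext
      show (((((m % (n:ℤ)).toNat : ℕ) : ℝ)/n : ℝ) : 𝕋) = ((x : ℝ) : 𝕋)
      have hcast : (((m % (n:ℤ)).toNat : ℕ) : ℝ) = (((m % (n:ℤ)) : ℤ) : ℝ) := by
        exact_mod_cast congrArg (fun z : ℤ => (z : ℝ)) (Int.toNat_of_nonneg hnn)
      rw [hcast, hx, T_coe_div_mod m n hn]
  exact Finite.of_surjective _ hsurj

lemma hom_finite_card_le (A : Type*) [AddCommGroup A] [Finite A] :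
    Finite (A →+ 𝕋) ∧ Nat.card (A →+ 𝕋) ≤ Nat.card A := by
  classical
  let toC : Multiplicative 𝕋 →* Circle :=
    { toFun := fun t => AddCircle.toCircle t.toAdd
      map_one' := AddCircle.toCircle_zero
      map_mul' := fun a b => AddCircle.toCircle_add a.toAdd b.toAdd }
  let J : (A →+ 𝕋) → (Multiplicative A →* ℂˣ) :=
    fun f => Circle.toUnits.comp (toC.comp (AddMonoidHom.toMultiplicative f))
  have hJ : Function.Injective J := by
    intro f g hfg
    ext a
    have h1 := congrArg (fun φ : Multiplicative A →* ℂˣ =>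
      ((φ (Multiplicative.ofAdd a) : ℂˣ) : ℂ)) hfg
    apply AddCircle.injective_toCircle one_ne_zero
    apply Circle.coe_injective
    simpa [J, toC] using h1
  haveI hexp : NeZero (Monoid.exponent (Multiplicative A)) :=
    ⟨Monoid.exponent_ne_zero_of_finite⟩
  haveI : NeZero ((Monoid.exponent (Multiplicative A) : ℕ) : ℂ) := by
    exact ⟨Nat.cast_ne_zero.mpr hexp.1⟩
  obtain ⟨E⟩ := CommGroup.monoidHom_mulEquiv_of_hasEnoughRootsOfUnity (Multiplicative A) ℂ
  haveI hfin : Finite (Multiplicative A →* ℂˣ) := Finite.of_equiv _ E.toEquiv.symm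
  constructor
  · exact Finite.of_injective J hJ
  · calc Nat.card (A →+ 𝕋) ≤ Nat.card (Multiplicative A →* ℂˣ) :=
        Nat.card_le_card_of_injective J hJ
      _ = Nat.card (Multiplicative A) := Nat.card_congr E.toEquiv
      _ = Nat.card A := Nat.card_congr Multiplicative.toAdd

lemma finiteG_of_finiteH (hsep : ∀ x : G, x ≠ 0 → ∃ h ∈ H, h x ≠ 0)
    (hfin : Finite ↥H) : Finite G := by
  classical
  set n := AddMonoid.exponent ↥H with hn
  have hn0 : n ≠ 0 := AddMonoid.exponent_ne_zero_of_finite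
  haveI : Finite {t : 𝕋 // n • t = 0} := T_torsion_finite n hn0
  let F : G → (↥H → {t : 𝕋 // n • t = 0}) := fun x h =>
    ⟨(h : G →+ 𝕋) x, by
      have h1 : ((n • h : ↥H) : G →+ 𝕋) = n • (h : G →+ 𝕋) := rfl
      have h2 : n • h = (0 : ↥H) := AddMonoid.exponent_nsmul_eq_zero h
      have : n • ((h : G →+ 𝕋) x) = ((n • h : ↥H) : G →+ 𝕋) x := by
        rw [h1]; rfl
      rw [this, h2]; rfl⟩
  have hF : Function.Injective F := by
    intro x y hxy
    by_contra hne
    obtain ⟨h, hH, hne0⟩ := hsep (x - y) (sub_ne_zero.mpr hne)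
    apply hne0
    have := congrArg Subtype.val (congrFun hxy ⟨h, hH⟩)
    rw [map_sub, show h x = h y from this, sub_self]
  exact Finite.of_injective F hF

lemma topWeight_discrete (X : Type*) [Finite X] (t : TopologicalSpace X)
    (ht : @DiscreteTopology X t) : topWeight t = Cardinal.mk X := by
  letI := t
  haveI := ht
  apply le_antisymm
  · have hbasis : TopologicalSpace.IsTopologicalBasis
        (Set.range (fun x : X => ({x} : Set X))) :=
      TopologicalSpace.isTopologicalBasis_of_isOpen_of_nhds
        (fun u _ => isOpen_discrete u)
        (fun a u hau _ => ⟨{a}, ⟨a, rfl⟩, Set.mem_singleton a,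
          Set.singleton_subset_iff.mpr hau⟩)
    exact (topWeight_le_of_basis _ hbasis).trans Cardinal.mk_range_le
  · rw [topWeight]
    haveI : Nonempty {B : Set (Set X) // TopologicalSpace.IsTopologicalBasis B} :=
      ⟨⟨_, TopologicalSpace.isTopologicalBasis_opens⟩⟩
    apply le_ciInf
    rintro ⟨B, hB⟩
    have hsing : ∀ x : X, ({x} : Set X) ∈ B := by
      intro x
      obtain ⟨v, hvB, hxv, hsub⟩ := hB.exists_subset_of_mem_open
        (Set.mem_singleton x) (isOpen_discrete {x})
      have : v = {x} := le_antisymm hsub (Set.singleton_subset_iff.mpr hxv)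
      rwa [← this]
    have hinj : Function.Injective (fun x : X => (⟨{x}, hsing x⟩ : ↥B)) := by
      intro x y hxy
      have : ({x} : Set X) = {y} := congrArg Subtype.val hxy
      exact Set.singleton_eq_singleton_iff.mp this
    exact Cardinal.mk_le_of_injective hinj

lemma finiteG_of_finite_basis (hsep : ∀ x : G, x ≠ 0 → ∃ h ∈ H, h x ≠ 0)
    {B : Set (Set G)} (hB : @TopologicalSpace.IsTopologicalBasis G (weakTopOf H) B)
    (hfinB : Finite ↥B) : Finite G := by
  letI : TopologicalSpace G := weakTopOf H
  haveI : T2Space G := t2 H hsep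
  have hinj : Function.Injective (fun x : G => {b : ↥B | x ∈ (b : Set G)}) := by
    intro x y hxy
    have hxy' : {b : ↥B | x ∈ (b : Set G)} = {b : ↥B | y ∈ (b : Set G)} := hxy
    by_contra hne
    obtain ⟨U, V, hU, hV, hxU, hyV, hUV⟩ := t2_separation hne
    obtain ⟨v, hvB, hxv, hsub⟩ := hB.exists_subset_of_mem_open hxU hU
    have hyv : y ∈ v := by
      have hmem := hxy' ▸ (show (⟨v, hvB⟩ : ↥B) ∈ {b : ↥B | x ∈ (b : Set G)} from hxv)
      exact hmem
    exact (Set.mem_empty_iff_false y).mp (Set.disjoint_iff.mp hUV ⟨hsub hyv, hyV⟩)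
  exact Finite.of_injective _ hinj

/-- The key lower bound: any basis of the weak topology has at least `|H|` elements
(up to `ℵ₀`). -/
lemma isOpen_weak_iff (S : Set G) : @IsOpen G (weakTopOf H) S ↔
    ∃ V : Set (↥H → 𝕋), IsOpen V ∧ ⇑(eHom H) ⁻¹' V = S := by
  rw [weakTopOf_eq H]
  exact isOpen_induced_iff

lemma mk_H_le_basis {B : Set (Set G)}
    (hB : @TopologicalSpace.IsTopologicalBasis G (weakTopOf H) B) :
    Cardinal.mk ↥H ≤ max (Cardinal.mk ↥B) Cardinal.aleph0 := by
  classical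
  letI tG : TopologicalSpace G := weakTopOf H
  set e := eHom H with he
  set Asub : AddSubgroup (↥H → 𝕋) := (eHom H).range.topologicalClosure with hAsub
  have hAcl : (Asub : Set (↥H → 𝕋)) = closure (Set.range ⇑e) := by
    rw [hAsub, AddSubgroup.topologicalClosure_coe, AddMonoidHom.coe_range]
  have hecont : Continuous ⇑e := continuous_iff_le_induced.mpr (weakTopOf_eq H).le
  have hKcompact : IsCompact (Asub : Set (↥H → 𝕋)) :=
    (AddSubgroup.isClosed_topologicalClosure _).isCompact
  -- global choices
  let vch : Set G → Set (↥H → 𝕋) := fun S =>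
    if h : ∃ V : Set (↥H → 𝕋), IsOpen V ∧ ⇑e ⁻¹' V = S then h.choose else ∅
  have hvch : ∀ S : Set G, @IsOpen G tG S → IsOpen (vch S) ∧ ⇑e ⁻¹' (vch S) = S := by
    intro S hS
    have hex : ∃ V : Set (↥H → 𝕋), IsOpen V ∧ ⇑e ⁻¹' V = S := (isOpen_weak_iff H S).mp hS
    simp only [vch, dif_pos hex]
    exact hex.choose_spec
  let pch : Set G → G := fun S => if h : S.Nonempty then h.choose else 0
  have hpch : ∀ S : Set G, S.Nonempty → pch S ∈ S := by
    intro S hS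
    simp only [pch, dif_pos hS]
    exact hS.choose_spec
  let R : Set G × Set G → Set (↥H → 𝕋) := fun a => {z | z - e (pch a.1) ∈ vch a.2}
  have hRopen : ∀ a : Set G × Set G, a.2 ∈ B → IsOpen (R a) := fun a ha =>
    ((hvch a.2 (hB.isOpen ha)).1).preimage (continuous_id.sub continuous_const)
  -- the selection lemma
  have hSel : ∀ O : Set (↥H → 𝕋), IsOpen O → ∀ y ∈ (Asub : Set (↥H → 𝕋)), y ∈ O →
      ∃ a : Set G × Set G, a.1 ∈ B ∧ a.2 ∈ B ∧ y ∈ R a ∧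
        ∀ z ∈ (Asub : Set (↥H → 𝕋)), z ∈ R a → z ∈ O := by
    intro O hO y hyK hyO
    -- a symmetric open neighborhood of 0 with W+W+W+y ⊆ O
    have hT : {q : ↥H → 𝕋 | q + y ∈ O} ∈ nhds (0 : ↥H → 𝕋) :=
      (hO.preimage (continuous_id.add continuous_const)).mem_nhds (by simpa using hyO)
    obtain ⟨V₁, hV₁, hV₁half⟩ := exists_nhds_zero_half hT
    obtain ⟨V₂, hV₂, hV₂half⟩ := exists_nhds_zero_half hV₁
    have hV₂sub : V₂ ⊆ V₁ := fun v hv => by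
      have := hV₂half v hv 0 (mem_of_mem_nhds hV₂)
      simpa using this
    set W : Set (↥H → 𝕋) := interior V₂ ∩ -interior V₂ with hWdef
    have hWopen : IsOpen W := isOpen_interior.inter isOpen_interior.neg
    have hW0 : (0 : ↥H → 𝕋) ∈ W := by
      constructor
      · exact mem_interior_iff_mem_nhds.mpr hV₂
      · rw [Set.mem_neg, neg_zero]
        exact mem_interior_iff_mem_nhds.mpr hV₂
    have hWsym : ∀ w ∈ W, -w ∈ W := by
      rintro w ⟨hw1, hw2⟩
      exact ⟨Set.mem_neg.mp hw2, by rwa [Set.mem_neg, neg_neg]⟩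
    have hWsubV₂ : W ⊆ V₂ := fun w hw => interior_subset hw.1
    have hW3 : ∀ a ∈ W, ∀ b ∈ W, ∀ c ∈ W, a + b + c + y ∈ O := by
      intro a ha b hb c hc
      have hab : a + b ∈ V₁ := hV₂half a (hWsubV₂ ha) b (hWsubV₂ hb)
      have habc : a + b + c ∈ {q : ↥H → 𝕋 | q + y ∈ O} :=
        hV₁half _ hab c (hV₂sub (hWsubV₂ hc))
      exact habc
    -- basic neighborhood B₂ of 0 inside e ⁻¹' W
    have hpreW : @IsOpen G tG (⇑e ⁻¹' W) := hWopen.preimage hecont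
    have h0pre : (0 : G) ∈ ⇑e ⁻¹' W := by
      simp only [Set.mem_preimage, map_zero]
      exact hW0
    obtain ⟨B₂, hB₂B, hB₂0, hB₂sub⟩ := hB.exists_subset_of_mem_open h0pre hpreW
    obtain ⟨hvopen, hvpre⟩ := hvch B₂ (hB.isOpen hB₂B)
    -- closure of e '' B₂ is inside W + W
    have hclW : ∀ z ∈ closure (⇑e '' B₂), ∃ w₁ ∈ W, ∃ w₂ ∈ W, z = w₁ + w₂ := by
      intro z hz
      have hopen : IsOpen {q : ↥H → 𝕋 | q - z ∈ W} :=
        hWopen.preimage (continuous_id.sub continuous_const)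
      have hzmem : z ∈ {q : ↥H → 𝕋 | q - z ∈ W} := by
        simp only [Set.mem_setOf_eq, sub_self]
        exact hW0
      obtain ⟨q, hq1, hq2⟩ := mem_closure_iff.mp hz _ hopen hzmem
      obtain ⟨x, hxB₂, rfl⟩ := hq2
      refine ⟨e x, hB₂sub hxB₂, -(e x - z), hWsym _ hq1, by abel⟩
    -- points of K inside vch B₂ are in the closure of e '' B₂
    have hVK : ∀ k ∈ (Asub : Set (↥H → 𝕋)), k ∈ vch B₂ → k ∈ closure (⇑e '' B₂) := by
      intro k hkK hkV
      rw [mem_closure_iff]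
      intro o ho hko
      have hkcl : k ∈ closure (Set.range ⇑e) := by rw [← hAcl]; exact hkK
      obtain ⟨q, hq1, x, rfl⟩ := mem_closure_iff.mp hkcl (o ∩ vch B₂)
        (ho.inter hvopen) ⟨hko, hkV⟩
      exact ⟨e x, hq1.1, ⟨x, by rw [← hvpre]; exact hq1.2, rfl⟩⟩
    -- choose the translation point d = e (pch B₁)
    set Y : Set (↥H → 𝕋) := {z | y - z ∈ vch B₂ ∩ W} with hYdef
    have hYopen : IsOpen Y :=
      (hvopen.inter hWopen).preimage (continuous_const.sub continuous_id)
    have h0v : (0 : ↥H → 𝕋) ∈ vch B₂ := by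
      have : (0 : G) ∈ ⇑e ⁻¹' (vch B₂) := by rw [hvpre]; exact hB₂0
      simpa only [Set.mem_preimage, map_zero] using this
    have hyY : y ∈ Y := by
      simp only [hYdef, Set.mem_setOf_eq, sub_self]
      exact ⟨h0v, hW0⟩
    have hycl : y ∈ closure (Set.range ⇑e) := by rw [← hAcl]; exact hyK
    obtain ⟨q, hqY, g, rfl⟩ := mem_closure_iff.mp hycl Y hYopen hyY
    have hYpre : @IsOpen G tG (⇑e ⁻¹' Y) := hYopen.preimage hecont
    obtain ⟨B₁, hB₁B, hgB₁, hB₁sub⟩ := hB.exists_subset_of_mem_open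
      (show g ∈ ⇑e ⁻¹' Y from hqY) hYpre
    have hB₁ne : B₁.Nonempty := ⟨g, hgB₁⟩
    have hde : e (pch B₁) ∈ Y := hB₁sub (hpch B₁ hB₁ne)
    have hdY : y - e (pch B₁) ∈ vch B₂ ∩ W := hde
    refine ⟨(B₁, B₂), hB₁B, hB₂B, hdY.1, ?_⟩
    intro z hzK hzR
    have hdK : e (pch B₁) ∈ Asub := (eHom H).range.le_topologicalClosure ⟨pch B₁, rfl⟩
    have hzd : z - e (pch B₁) ∈ (Asub : Set (↥H → 𝕋)) := Asub.sub_mem hzK hdK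
    obtain ⟨w₁, hw₁, w₂, hw₂, hzdw⟩ := hclW _ (hVK _ hzd hzR)
    have hrw : z = w₁ + w₂ + -(y - e (pch B₁)) + y := by
      have hz' : z = w₁ + w₂ + e (pch B₁) := by
        rw [← hzdw]; abel
      rw [hz']; abel
    rw [hrw]
    exact hW3 w₁ hw₁ w₂ hw₂ _ (hWsym _ hdY.2)
  -- the covering data for each character
  have hcov : ∀ χ : ↥H, ∃ s : Finset (Set G × Set G × ℕ),
      (∀ a ∈ s, a.1 ∈ B ∧ a.2.1 ∈ B) ∧
      (∀ z ∈ (Asub : Set (↥H → 𝕋)), ∃ a ∈ s, z ∈ R (a.1, a.2.1)) ∧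
      (∀ a ∈ s, ∀ z ∈ (Asub : Set (↥H → 𝕋)), z ∈ R (a.1, a.2.1) →
        ‖z χ - (((a.2.2 : ℝ)/32 : ℝ) : 𝕋)‖ < 1/8) := by
    intro χ
    have hsel' : ∀ y : {z : ↥H → 𝕋 // z ∈ (Asub : Set (↥H → 𝕋))},
        ∃ a : Set G × Set G, a.1 ∈ B ∧ a.2 ∈ B ∧ (y : ↥H → 𝕋) ∈ R a ∧
          ∀ z ∈ (Asub : Set (↥H → 𝕋)), z ∈ R a →
            z ∈ (fun w : ↥H → 𝕋 => w χ) ⁻¹' Metric.ball ((y : ↥H → 𝕋) χ) (1/32) := by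
      intro y
      exact hSel _ (Metric.isOpen_ball.preimage (continuous_apply χ)) _ y.2
        (by simp [Metric.mem_ball])
    choose a ha1 ha2 ha3 ha4 using hsel'
    choose k hk1 hk2 using fun y : {z : ↥H → 𝕋 // z ∈ (Asub : Set (↥H → 𝕋))} =>
      T_exists_grid ((y : ↥H → 𝕋) χ)
    have hcover : (Asub : Set (↥H → 𝕋)) ⊆
        ⋃ y : {z : ↥H → 𝕋 // z ∈ (Asub : Set (↥H → 𝕋))}, R (a y) :=
      fun z hz => Set.mem_iUnion.mpr ⟨⟨z, hz⟩, ha3 _⟩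
    obtain ⟨T, hT⟩ := hKcompact.elim_finite_subcover (fun y => R (a y))
      (fun y => hRopen _ (ha2 y)) hcover
    refine ⟨T.image (fun y => ((a y).1, (a y).2, k y)), ?_, ?_, ?_⟩
    · intro q hq
      obtain ⟨y, -, rfl⟩ := Finset.mem_image.mp hq
      exact ⟨ha1 y, ha2 y⟩
    · intro z hz
      obtain ⟨y, hyT, hzy⟩ := Set.mem_iUnion₂.mp (hT hz)
      exact ⟨((a y).1, (a y).2, k y), Finset.mem_image.mpr ⟨y, hyT, rfl⟩, by simpa using hzy⟩
    · intro q hq z hz hzR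
      obtain ⟨y, hyT, rfl⟩ := Finset.mem_image.mp hq
      have hzO := ha4 y z hz (by simpa using hzR)
      simp only [Set.mem_preimage, Metric.mem_ball, dist_eq_norm] at hzO
      have htri : ‖z χ - ((((k y : ℕ) : ℝ)/32 : ℝ) : 𝕋)‖
          ≤ ‖z χ - (y : ↥H → 𝕋) χ‖ + ‖(y : ↥H → 𝕋) χ - ((((k y : ℕ) : ℝ)/32 : ℝ) : 𝕋)‖ := by
        simpa [dist_eq_norm] using
          dist_triangle (z χ) ((y : ↥H → 𝕋) χ) (((((k y : ℕ) : ℝ)/32 : ℝ) : 𝕋))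
      have := hk2 y
      calc ‖z χ - ((((k y : ℕ) : ℝ)/32 : ℝ) : 𝕋)‖
          ≤ ‖z χ - (y : ↥H → 𝕋) χ‖ + ‖(y : ↥H → 𝕋) χ - ((((k y : ℕ) : ℝ)/32 : ℝ) : 𝕋)‖ := htri
        _ < 1/32 + 1/64 := by exact add_lt_add_of_lt_of_le hzO this
        _ < 1/8 := by norm_num
  choose Φ hΦ1 hΦ2 hΦ3 using hcov
  have hΦinj : Function.Injective Φ := by
    intro χ χ' hχχ
    have hclose : ∀ x : G, ‖(χ : G →+ 𝕋) x - (χ' : G →+ 𝕋) x‖ < 1/4 := by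
      intro x
      have hxK : e x ∈ (Asub : Set (↥H → 𝕋)) :=
        (eHom H).range.le_topologicalClosure ⟨x, rfl⟩
      obtain ⟨q, hqS, hqR⟩ := hΦ2 χ (e x) hxK
      have hb1 := hΦ3 χ q hqS _ hxK hqR
      have hb2 := hΦ3 χ' q (hχχ ▸ hqS) _ hxK hqR
      have h1 : e x χ = (χ : G →+ 𝕋) x := rfl
      have h2 : e x χ' = (χ' : G →+ 𝕋) x := rfl
      rw [h1] at hb1
      rw [h2] at hb2
      set c : 𝕋 := (((q.2.2 : ℝ)/32 : ℝ) : 𝕋)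
      have htri : ‖(χ : G →+ 𝕋) x - (χ' : G →+ 𝕋) x‖
          ≤ ‖(χ : G →+ 𝕋) x - c‖ + ‖(χ' : G →+ 𝕋) x - c‖ := by
        have := dist_triangle ((χ : G →+ 𝕋) x) c ((χ' : G →+ 𝕋) x)
        simpa [dist_eq_norm, norm_sub_rev ((χ' : G →+ 𝕋) x) c] using this
      calc ‖(χ : G →+ 𝕋) x - (χ' : G →+ 𝕋) x‖
          ≤ ‖(χ : G →+ 𝕋) x - c‖ + ‖(χ' : G →+ 𝕋) x - c‖ := htri
        _ < 1/8 + 1/8 := add_lt_add hb1 hb2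
        _ ≤ 1/4 := by norm_num
    exact Subtype.ext (addHom_eq_of_close hclose)
  -- cardinality bookkeeping
  set S : Set (Set G × Set G × ℕ) := {a | a.1 ∈ B ∧ a.2.1 ∈ B} with hSdef
  let Ψ : ↥H → Finset ↥S := fun χ => (Φ χ).subtype (· ∈ S)
  have hΨeq : ∀ χ, ((Φ χ).subtype (· ∈ S)).map (Function.Embedding.subtype _) = Φ χ :=
    fun χ => Finset.subtype_map_of_mem (fun a ha => hΦ1 χ a ha)
  have hΨinj : Function.Injective Ψ := by
    intro χ χ' hqq
    apply hΦinj
    rw [← hΨeq χ, ← hΨeq χ']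
    simp only [Ψ] at hqq
    rw [hqq]
  have hHle : Cardinal.mk ↥H ≤ Cardinal.mk (Finset ↥S) := Cardinal.mk_le_of_injective hΨinj
  set κ : Cardinal := max (Cardinal.mk ↥B) Cardinal.aleph0 with hκdef
  have hκinf : Cardinal.aleph0 ≤ κ := le_max_right _ _
  have hSle : Cardinal.mk ↥S ≤ κ := by
    have hinj : Function.Injective (fun a : ↥S => ((⟨a.1.1, a.2.1⟩ : ↥B),
        (⟨a.1.2.1, a.2.2⟩ : ↥B), a.1.2.2)) := by
      rintro ⟨⟨a1, a2, a3⟩, ha⟩ ⟨⟨b1, b2, b3⟩, hb⟩ hab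
      simp only [Prod.mk.injEq, Subtype.mk.injEq] at hab
      simp only [Subtype.mk.injEq, Prod.mk.injEq]
      exact ⟨hab.1, hab.2.1, hab.2.2⟩
    calc Cardinal.mk ↥S ≤ Cardinal.mk (↥B × ↥B × ℕ) := Cardinal.mk_le_of_injective hinj
      _ = Cardinal.mk ↥B * (Cardinal.mk ↥B * Cardinal.aleph0) := by
          simp [Cardinal.mk_prod, Cardinal.lift_id', Cardinal.mk_nat, Cardinal.lift_aleph0]
      _ ≤ κ * (κ * κ) := by
          gcongr
          · exact le_max_left _ _
          · exact le_max_left _ _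
      _ = κ := by rw [Cardinal.mul_eq_self hκinf, Cardinal.mul_eq_self hκinf]
  have hFinsetle : Cardinal.mk (Finset ↥S) ≤ κ := by
    rcases finite_or_infinite ↥S with hfS | hiS
    · haveI : Fintype ↥S := Fintype.ofFinite ↥S
      haveI : Finite (Finset ↥S) := inferInstance
      exact le_trans (le_of_lt (Cardinal.lt_aleph0_of_finite _)) hκinf
    · rw [Cardinal.mk_finset_of_infinite]
      exact hSle
  exact hHle.trans hFinsetle

lemma weight_eq_of_finite (hsep : ∀ x : G, x ≠ 0 → ∃ h ∈ H, h x ≠ 0)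
    (hfin : Finite ↥H) : topWeight (weakTopOf H) = Cardinal.mk ↥H := by
  haveI hG : Finite G := finiteG_of_finiteH H hsep hfin
  letI : TopologicalSpace G := weakTopOf H
  haveI : T2Space G := t2 H hsep
  haveI hdisc : DiscreteTopology G := inferInstance
  rw [topWeight_discrete G _ hdisc]
  -- card comparisons
  haveI hfinHomG := (hom_finite_card_le G).1
  haveI hfinHomH := (hom_finite_card_le ↥H).1
  have h1 : Nat.card G ≤ Nat.card (↥H →+ 𝕋) := by
    apply Nat.card_le_card_of_injective
      (fun x : G => AddMonoidHom.mk' (fun h : ↥H => (h : G →+ 𝕋) x) (fun h h' => rfl))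
    intro x y hxy
    by_contra hne
    obtain ⟨h, hH, hne0⟩ := hsep (x - y) (sub_ne_zero.mpr hne)
    apply hne0
    have := congrArg (fun f : ↥H →+ 𝕋 => f ⟨h, hH⟩) hxy
    rw [map_sub, show h x = h y from this, sub_self]
  have h2 : Nat.card (↥H →+ 𝕋) ≤ Nat.card ↥H := (hom_finite_card_le ↥H).2
  have h3 : Nat.card ↥H ≤ Nat.card (G →+ 𝕋) :=
    Nat.card_le_card_of_injective _ (Subtype.val_injective (p := (· ∈ H)))
  have h4 : Nat.card (G →+ 𝕋) ≤ Nat.card G := (hom_finite_card_le G).2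
  have hcard : Nat.card G = Nat.card ↥H :=
    le_antisymm (h1.trans h2) (h3.trans h4)
  obtain ⟨e⟩ := Finite.card_eq.mp hcard
  exact Cardinal.mk_congr e

end StmtAux

theorem stmt0 (G : Type*) [AddCommGroup G] (H : AddSubgroup (G →+ 𝕋))
    (hsep : ∀ x : G, x ≠ 0 → ∃ h ∈ H, h x ≠ 0) :
    @T2Space G (weakTopOf H) ∧
    @IsTopologicalAddGroup G (weakTopOf H) inferInstance ∧
    TotallyBoundedGroupTop (weakTopOf H) ∧
    topWeight (weakTopOf H) = Cardinal.mk H := by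
  refine ⟨StmtAux.t2 H hsep, StmtAux.topAddGroup H, StmtAux.totBdd H, ?_⟩
  rcases finite_or_infinite ↥H with hfin | hinf
  · exact StmtAux.weight_eq_of_finite H hsep hfin
  · apply le_antisymm (StmtAux.topWeight_le_mkH H hinf)
    rw [topWeight]
    haveI : Nonempty {B : Set (Set G) //
        @TopologicalSpace.IsTopologicalBasis G (weakTopOf H) B} :=
      ⟨⟨_, @TopologicalSpace.isTopologicalBasis_opens G (weakTopOf H)⟩⟩
    apply le_ciInf
    rintro ⟨B, hB⟩
    rcases finite_or_infinite ↥B with hfinB | hinfB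
    · haveI : Finite G := StmtAux.finiteG_of_finite_basis H hsep hB hfinB
      haveI : Finite (G →+ AddCircle (1:ℝ)) := (StmtAux.hom_finite_card_le G).1
      haveI : Finite ↥H := Subtype.finite
      exact absurd ‹Finite ↥H› (not_finite_iff_infinite.mpr hinf)
    · have hle := StmtAux.mk_H_le_basis H hB
      rwa [max_eq_left (Cardinal.aleph0_le_mk ↥B)] at hle
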